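/- If (x*, o*) is an endemic equilibrium of the coupled epidemic–opinion model (i.e., x* ≥ 0 and x* ≠ 0), then x* is strictly interior: 0 ≪ x* ≪ e (every entry of x* lies strictly between 0 and 1) and −0.5e ≪ o* ≪ 0.5e (every entry of o* lies strictly between −0.5 and 0.5). -/

import Mathlib

open Matrix Filter Set

noncomputable section

/-- The modified sign function: `1` if `0 ≤ x`, `-1` otherwise. -/
def sgnm (x : ℝ) : ℝ := if 0 ≤ x then 1 else -1

/-- Gauge transformation matrix `Φ(o) = diag(sgnm o₁, …, sgnm oₙ)`. -/
def gaugeMat {n : ℕ} (o : Fin n → ℝ) : Matrix (Fin n) (Fin n) ℝ :=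
  Matrix.diagonal fun i => sgnm (o i)

/-- Graph Laplacian of a nonnegative adjacency matrix with zero diagonal. -/
def lapOf {n : ℕ} (A : Matrix (Fin n) (Fin n) ℝ) : Matrix (Fin n) (Fin n) ℝ :=
  Matrix.diagonal (fun i => ∑ j, A i j) - A

/-- Irreducibility of a (nonnegative) matrix: between any two indices some power
has a strictly positive entry. -/
def MatIrreducible {n : ℕ} (M : Matrix (Fin n) (Fin n) ℝ) : Prop :=
  ∀ i j : Fin n, ∃ k : ℕ, 1 ≤ k ∧ 0 < (M ^ k) i j

/-- Spectral radius of a real square matrix, as the largest modulus of a complex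
eigenvalue. -/
def specRad {m : Type*} [Fintype m] [DecidableEq m] (A : Matrix m m ℝ) : ℝ :=
  sSup ((fun z : ℂ => ‖z‖) '' spectrum ℂ (A.map (algebraMap ℝ ℂ)))

/-- Spectral abscissa of a real square matrix, as the largest real part of a
complex eigenvalue. -/
def specAbs {m : Type*} [Fintype m] [DecidableEq m] (A : Matrix m m ℝ) : ℝ :=
  sSup (Complex.re '' spectrum ℂ (A.map (algebraMap ℝ ℂ)))

/-- A real square matrix is Hurwitz if all its (complex) eigenvalues have
negative real part. -/
def IsHurwitz {m : Type*} [Fintype m] [DecidableEq m] (A : Matrix m m ℝ) : Prop :=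
  ∀ z ∈ spectrum ℂ (A.map (algebraMap ℝ ℂ)), z.re < 0

/-- The data of the coupled networked SIS epidemic–opinion model over `n`
communities. -/
structure EpiOpModel (n : ℕ) where
  /-- healing rates -/
  δ : Fin n → ℝ
  /-- minimum healing rate -/
  δmin : ℝ
  /-- minimum infection rate -/
  βmin : ℝ
  /-- unweighted adjacency matrix `Ã` of the (strongly connected) epidemic graph -/
  Atil : Matrix (Fin n) (Fin n) ℝ
  /-- infection matrix `B = [β_ij]` -/
  B : Matrix (Fin n) (Fin n) ℝ
  /-- nonnegative adjacency matrix `Ā_u` of the (strongly connected) opinion graph -/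
  Au : Matrix (Fin n) (Fin n) ℝ
  δmin_pos : 0 < δmin
  δ_ge : ∀ i, δmin ≤ δ i
  βmin_pos : 0 < βmin
  Atil_01 : ∀ i j, Atil i j = 0 ∨ Atil i j = 1
  Atil_diag : ∀ i, Atil i i = 0
  B_edge : ∀ i j, Atil i j = 1 → βmin ≤ B i j
  B_off : ∀ i j, Atil i j = 0 → B i j = 0
  B_irred : MatIrreducible B
  Au_nonneg : ∀ i j, 0 ≤ Au i j
  Au_diag : ∀ i, Au i i = 0
  Au_irred : MatIrreducible Au

namespace EpiOpModel

/-- The state space `[0,1]^n × [−0.5, 0.5]^n`. -/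
def InBox {n : ℕ} (_M : EpiOpModel n) (x o : Fin n → ℝ) : Prop :=
  (∀ i, x i ∈ Set.Icc (0:ℝ) 1) ∧ (∀ i, o i ∈ Set.Icc (-(1/2) : ℝ) (1/2))

variable {n : ℕ} (M : EpiOpModel n)

/-- `B_min = β_min Ã`. -/
def Bmin : Matrix (Fin n) (Fin n) ℝ := M.βmin • M.Atil

/-- `D = diag(δ₁, …, δₙ)`. -/
def Dmax : Matrix (Fin n) (Fin n) ℝ := Matrix.diagonal M.δ

/-- `D_min = δ_min I`. -/
def Dmin : Matrix (Fin n) (Fin n) ℝ := M.δmin • (1 : Matrix (Fin n) (Fin n) ℝ)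

/-- Opinion-dependent healing matrix `D(o) = D_min + (D − D_min)(O + 0.5 I)`. -/
def Dmat (o : Fin n → ℝ) : Matrix (Fin n) (Fin n) ℝ :=
  Matrix.diagonal fun i => M.δmin + (M.δ i - M.δmin) * (o i + 1/2)

/-- Opinion-dependent infection matrix `B(o) = B − (O + 0.5 I)(B − B_min)`. -/
def Bmat (o : Fin n → ℝ) : Matrix (Fin n) (Fin n) ℝ :=
  Matrix.of fun i j => M.B i j - (o i + 1/2) * (M.B i j - M.Bmin i j)

/-- Laplacian `L̄_u` of the opinion adjacency matrix. -/
def Lu : Matrix (Fin n) (Fin n) ℝ := lapOf M.Au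

/-- Signed opinion Laplacian `Φ(o) L̄_u Φ(o)`. -/
def Lsgn (o : Fin n → ℝ) : Matrix (Fin n) (Fin n) ℝ :=
  gaugeMat o * M.Lu * gaugeMat o

/-- Epidemic vector field `ẋ = −D(o)x + (I − X)B(o)x`. -/
def fx (x o : Fin n → ℝ) : Fin n → ℝ :=
  -(M.Dmat o).mulVec x +
    (Matrix.diagonal fun i => 1 - x i).mulVec ((M.Bmat o).mulVec x)

/-- Opinion vector field `ȯ = x − (Φ(o) L̄_u Φ(o) + I) o − 0.5 e`. -/
def fo (x o : Fin n → ℝ) : Fin n → ℝ :=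
  x - (M.Lsgn o + 1).mulVec o - (fun _ => (1/2 : ℝ))

/-- Equilibria of the coupled system. -/
def IsEquilibrium (x o : Fin n → ℝ) : Prop := M.fx x o = 0 ∧ M.fo x o = 0

/-- Trajectories (solutions) of the coupled system. -/
def IsTrajectory (x o : ℝ → Fin n → ℝ) : Prop :=
  ∀ t : ℝ, ∀ i : Fin n,
    HasDerivAt (fun s => x s i) (M.fx (x t) (o t) i) t ∧
    HasDerivAt (fun s => o s i) (M.fo (x t) (o t) i) t

/-- The Opinion-Dependent Reproduction Number `R^o = ρ(D(o)⁻¹ B(o))`. -/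
def Rnum (o : Fin n → ℝ) : ℝ := specRad ((M.Dmat o)⁻¹ * M.Bmat o)

/-- `R_max = ρ(D_min⁻¹ B)`. -/
def Rmax : ℝ := specRad (M.Dmin⁻¹ * M.B)

/-- `R_min = ρ(D⁻¹ B_min)`. -/
def Rmin : ℝ := specRad (M.Dmax⁻¹ * M.Bmin)

/-- `W(o) = −D(o) + B(o)`. -/
def Wmat (o : Fin n → ℝ) : Matrix (Fin n) (Fin n) ℝ := -(M.Dmat o) + M.Bmat o

/-- Jacobian matrix of the coupled system evaluated at a healthy equilibrium
`(0, o)`: block lower triangular with diagonal blocks `W(o)` and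
`−(Φ(o) L̄_u Φ(o) + I)`. -/
def JacHealthy (o : Fin n → ℝ) : Matrix (Fin n ⊕ Fin n) (Fin n ⊕ Fin n) ℝ :=
  Matrix.fromBlocks (M.Wmat o) 0 1 (-(M.Lsgn o + 1))

/-- Lyapunov stability of an equilibrium of the coupled system. -/
def LyapunovStable (xe oe : Fin n → ℝ) : Prop :=
  ∀ ε > 0, ∃ δ > 0, ∀ x o : ℝ → Fin n → ℝ, M.IsTrajectory x o →
    dist (x 0, o 0) (xe, oe) < δ → ∀ t ≥ 0, dist (x t, o t) (xe, oe) < ε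

/-- Local exponential stability of an equilibrium of the coupled system. -/
def LocExpStable (xe oe : Fin n → ℝ) : Prop :=
  ∃ δ > 0, ∃ C > 0, ∃ α > 0, ∀ x o : ℝ → Fin n → ℝ, M.IsTrajectory x o →
    dist (x 0, o 0) (xe, oe) < δ →
    ∀ t ≥ 0, dist (x t, o t) (xe, oe) ≤
      C * Real.exp (-α * t) * dist (x 0, o 0) (xe, oe)

end EpiOpModel

private lemma sgnm_mul_self (t : ℝ) : sgnm t * t = |t| := by
  unfold sgnm
  split_ifs with h
  · rw [abs_of_nonneg h]; ring
  · rw [abs_of_neg (not_le.mp h)]; ring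

private lemma sgnm_mul_abs (t : ℝ) : sgnm t * |t| = t := by
  unfold sgnm
  split_ifs with h
  · rw [abs_of_nonneg h]; ring
  · rw [abs_of_neg (not_le.mp h)]; ring

private lemma pow_entry_nonneg {n : ℕ} (B : Matrix (Fin n) (Fin n) ℝ)
    (hB : ∀ i j, 0 ≤ B i j) : ∀ (k : ℕ) (i j), 0 ≤ (B ^ k) i j := by
  intro k
  induction k with
  | zero => intro i j; rw [pow_zero]; by_cases h : i = j <;> simp [Matrix.one_apply, h]
  | succ k ih =>
      intro i j
      rw [pow_succ, Matrix.mul_apply]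
      exact Finset.sum_nonneg fun l _ => mul_nonneg (ih i l) (hB l j)

private lemma zero_propagates {n : ℕ} (B : Matrix (Fin n) (Fin n) ℝ)
    (hB : ∀ i j, 0 ≤ B i j) (x : Fin n → ℝ)
    (hclosed : ∀ i j, x i = 0 → 0 < B i j → x j = 0) :
    ∀ (k : ℕ) (i j), x i = 0 → 0 < (B ^ k) i j → x j = 0 := by
  intro k
  induction k with
  | zero =>
      intro i j hx h
      rw [pow_zero] at h
      by_cases hij : i = j
      · exact hij ▸ hx
      · simp [Matrix.one_apply, hij] at h
  | succ k ih =>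
      intro i j hx h
      rw [pow_succ, Matrix.mul_apply] at h
      obtain ⟨l, -, hl⟩ := Finset.exists_lt_of_sum_lt
        (show ∑ _l : Fin n, (0:ℝ) < ∑ l, (B ^ k) i l * B l j by simpa using h)
      have h1 : 0 < (B ^ k) i l := by
        rcases (pow_entry_nonneg B hB k i l).lt_or_eq with h1 | h1
        · exact h1
        · rw [← h1, zero_mul] at hl; exact absurd hl (lt_irrefl 0)
      have h2 : 0 < B l j := by
        rcases (hB l j).lt_or_eq with h2 | h2
        · exact h2
        · rw [← h2, mul_zero] at hl; exact absurd hl (lt_irrefl 0)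
      exact hclosed l j (ih i l hx h1) h2

/-- Lemma 6: if `(x*, o*)` is an endemic equilibrium
(`x* ≥ 0`, `x* ≠ 0`), then `0 ≪ x* ≪ e` and `−0.5e ≪ o* ≪ 0.5e`
(strict entrywise inequalities). -/
theorem endemic_equilibrium_interior {n : ℕ} (M : EpiOpModel n)
    (x o : Fin n → ℝ) (hbox : M.InBox x o) (heq : M.IsEquilibrium x o)
    (hx_nonneg : ∀ i, 0 ≤ x i) (hx_ne : x ≠ 0) :
    (∀ i, 0 < x i ∧ x i < 1) ∧ (∀ i, -(1/2) < o i ∧ o i < 1/2) := by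
  obtain ⟨hxbox, hobox⟩ := hbox
  obtain ⟨hfx, hfo⟩ := heq
  have hd : ∀ i, 0 < M.δmin + (M.δ i - M.δmin) * (o i + 1/2) := by
    intro i
    nlinarith [M.δmin_pos, M.δ_ge i, (hobox i).1]
  have ht01 : ∀ i, 0 ≤ o i + 1/2 ∧ o i + 1/2 ≤ 1 := by
    intro i; constructor <;> [linarith [(hobox i).1]; linarith [(hobox i).2]]
  have hB_nonneg : ∀ i j, 0 ≤ M.B i j := by
    intro i j
    rcases M.Atil_01 i j with h | h
    · rw [M.B_off i j h]
    · exact le_trans M.βmin_pos.le (M.B_edge i j h)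
  have hBo_nonneg : ∀ i j, 0 ≤ M.Bmat o i j := by
    intro i j
    rcases M.Atil_01 i j with h | h
    · simp [EpiOpModel.Bmat, EpiOpModel.Bmin, M.B_off i j h, h]
    · have hb := M.B_edge i j h
      simp only [EpiOpModel.Bmat, EpiOpModel.Bmin, Matrix.of_apply, Matrix.smul_apply, h,
        smul_eq_mul, mul_one]
      nlinarith [(ht01 i).1, (ht01 i).2, M.βmin_pos]
  have hBo_pos : ∀ i j, 0 < M.B i j → 0 < M.Bmat o i j := by
    intro i j hBij
    rcases M.Atil_01 i j with h | h
    · rw [M.B_off i j h] at hBij; exact absurd hBij (lt_irrefl 0)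
    · have hb := M.B_edge i j h
      simp only [EpiOpModel.Bmat, EpiOpModel.Bmin, Matrix.of_apply, Matrix.smul_apply, h,
        smul_eq_mul, mul_one]
      nlinarith [(ht01 i).1, (ht01 i).2, M.βmin_pos]
  have heqx : ∀ i, -((M.δmin + (M.δ i - M.δmin) * (o i + 1/2)) * x i)
      + (1 - x i) * ∑ j, M.Bmat o i j * x j = 0 := by
    intro i
    have h := congrFun hfx i
    simp only [EpiOpModel.fx, EpiOpModel.Dmat, Pi.add_apply, Pi.neg_apply, Pi.zero_apply,
      Matrix.mulVec_diagonal] at h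
    simp only [Matrix.mulVec, dotProduct] at h
    convert h using 2
  have hclosed : ∀ i j, x i = 0 → 0 < M.B i j → x j = 0 := by
    intro i j hxi hBij
    have h := heqx i
    rw [hxi] at h
    have hsum : ∑ j, M.Bmat o i j * x j = 0 := by linarith
    have hterm := (Finset.sum_eq_zero_iff_of_nonneg
      (fun j _ => mul_nonneg (hBo_nonneg i j) (hx_nonneg j))).mp hsum j (Finset.mem_univ j)
    have hpos := hBo_pos i j hBij
    exact (mul_eq_zero.mp hterm).resolve_left (ne_of_gt hpos)
  have hxpos : ∀ i, 0 < x i := by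
    intro i
    rcases (hx_nonneg i).lt_or_eq with h | h
    · exact h
    · exfalso
      obtain ⟨k, hk⟩ := Function.ne_iff.mp hx_ne
      obtain ⟨m, -, hm⟩ := M.B_irred i k
      exact hk (zero_propagates M.B hB_nonneg x hclosed m i k h.symm hm)
  have hxlt1 : ∀ i, x i < 1 := by
    intro i
    rcases ((hxbox i).2).lt_or_eq with h | h
    · exact h
    · exfalso
      have he := heqx i
      rw [h] at he
      have := hd i
      nlinarith
  refine ⟨fun i => ⟨hxpos i, hxlt1 i⟩, ?_⟩
  -- opinion part
  have key : ∀ i, (M.Lsgn o).mulVec o i =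
      (∑ j, M.Au i j) * o i - sgnm (o i) * ∑ j, M.Au i j * |o j| := by
    intro i
    have hent : ∀ j, M.Lsgn o i j = sgnm (o i) * (M.Lu i j) * sgnm (o j) := by
      intro j
      simp [EpiOpModel.Lsgn, gaugeMat, Matrix.mul_diagonal, Matrix.diagonal_mul]
    have h1 : (M.Lsgn o).mulVec o i = ∑ j, sgnm (o i) * (M.Lu i j * |o j|) := by
      rw [Matrix.mulVec, dotProduct]
      refine Finset.sum_congr rfl fun j _ => ?_
      rw [hent j]
      rw [show sgnm (o i) * M.Lu i j * sgnm (o j) * o j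
          = sgnm (o i) * (M.Lu i j * (sgnm (o j) * o j)) by ring, sgnm_mul_self]
    rw [h1, ← Finset.mul_sum]
    have h2 : ∑ j, M.Lu i j * |o j|
        = (∑ j, M.Au i j) * |o i| - ∑ j, M.Au i j * |o j| := by
      simp only [EpiOpModel.Lu, lapOf, Matrix.sub_apply, sub_mul, Finset.sum_sub_distrib,
        Matrix.diagonal_apply, ite_mul, zero_mul]
      congr 1
      simp [Finset.sum_ite_eq]
    rw [h2, mul_sub]
    congr 1
    rw [show sgnm (o i) * ((∑ j, M.Au i j) * |o i|)
        = (∑ j, M.Au i j) * (sgnm (o i) * |o i|) by ring, sgnm_mul_abs]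
  have heqo : ∀ i, x i - (((∑ j, M.Au i j) * o i - sgnm (o i) * ∑ j, M.Au i j * |o j|)
      + o i) - 1/2 = 0 := by
    intro i
    have h := congrFun hfo i
    simp only [EpiOpModel.fo, Pi.sub_apply, Matrix.add_mulVec, Matrix.one_mulVec,
      Pi.add_apply, Pi.zero_apply] at h
    rw [key i] at h
    linarith [h]
  have habs : ∀ j, |o j| ≤ 1/2 := fun j => abs_le.mpr ⟨(hobox j).1, (hobox j).2⟩
  have hsum_le : ∀ i, ∑ j, M.Au i j * |o j| ≤ (∑ j, M.Au i j) * (1/2) := by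
    intro i
    rw [Finset.sum_mul]
    exact Finset.sum_le_sum fun j _ =>
      mul_le_mul_of_nonneg_left (habs j) (M.Au_nonneg i j)
  intro i
  constructor
  · rcases ((hobox i).1).lt_or_eq with h | h
    · linarith
    · exfalso
      have he := heqo i
      rw [← h] at he
      have hs : sgnm (-(1/2) : ℝ) = -1 := by
        unfold sgnm; norm_num
      rw [hs] at he
      nlinarith [hxpos i, hsum_le i, he]
  · rcases ((hobox i).2).lt_or_eq with h | h
    · exact h
    · exfalso
      have he := heqo i
      rw [h] at he
      have hs : sgnm ((1:ℝ)/2) = 1 := by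
        unfold sgnm; norm_num
      rw [hs] at he
      nlinarith [hxlt1 i, hsum_le i, he]
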